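/- If X is a compact ANR space, then tc(X) = tc_g(X). If, in addition, X is connected, then cat(X) = cat_g(X). -/

import Mathlib

universe u v w

/-- A metrizable space `Y` is an ANR if for every metrizable space `W`, every closed
subset `C ⊆ W` and every continuous map `g : C → Y`, there exist an open set `U` with
`C ⊆ U ⊆ W` and a continuous map `G : U → Y` extending `g`. -/
def IsANR (Y : Type v) [TopologicalSpace Y] : Prop :=
  TopologicalSpace.MetrizableSpace Y ∧
  ∀ (W : Type w) [TopologicalSpace W] [TopologicalSpace.MetrizableSpace W]
    (C : Set W), IsClosed C → ∀ g : C(C, Y),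
    ∃ U : Set W, IsOpen U ∧ C ⊆ U ∧
      ∃ G : C(U, Y), ∀ (w : W) (hC : w ∈ C) (hU : w ∈ U), G ⟨w, hU⟩ = g ⟨w, hC⟩

open scoped ENat

/-- A subset `A ⊆ X × X` admits a continuous local section of the path fibration
`π_X : X^I → X × X`, `α ↦ (α(0), α(1))`. -/
def HasLocalSectionPi {X : Type u} [TopologicalSpace X] (A : Set (X × X)) : Prop :=
  ∃ s : C(A, C(unitInterval, X)), ∀ a : A, ((s a) 0, (s a) 1) = (a : X × X)

/-- Topological complexity of `X`: least `n` (or `∞`) such that `X × X` is covered by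
`n+1` open subsets each admitting a local section of `π_X`. -/
noncomputable def tc (X : Type u) [TopologicalSpace X] : ℕ∞ :=
  sInf {m : ℕ∞ | ∃ n : ℕ, m = n ∧ ∃ A : Fin (n + 1) → Set (X × X),
    (⋃ i, A i) = Set.univ ∧ ∀ i, IsOpen (A i) ∧ HasLocalSectionPi (A i)}

/-- Generalized topological complexity of `X`: least `n` (or `∞`) such that `X × X` is
covered by `n+1` arbitrary subsets each admitting a local section of `π_X`. -/
noncomputable def tcg (X : Type u) [TopologicalSpace X] : ℕ∞ :=
  sInf {m : ℕ∞ | ∃ n : ℕ, m = n ∧ ∃ A : Fin (n + 1) → Set (X × X),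
    (⋃ i, A i) = Set.univ ∧ ∀ i, HasLocalSectionPi (A i)}

/-- LS category of `X` (`cat(X) = cat(id_X)`): least `n` (or `∞`) such that `X` is
covered by `n+1` open subsets on which the identity is nullhomotopic. -/
noncomputable def catSpace (X : Type u) [TopologicalSpace X] : ℕ∞ :=
  sInf {m : ℕ∞ | ∃ n : ℕ, m = n ∧ ∃ A : Fin (n + 1) → Set X,
    (⋃ i, A i) = Set.univ ∧
    ∀ i, IsOpen (A i) ∧ ((ContinuousMap.id X).restrict (A i)).Nullhomotopic}

/-- Generalized LS category of `X`. -/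
noncomputable def catgSpace (X : Type u) [TopologicalSpace X] : ℕ∞ :=
  sInf {m : ℕ∞ | ∃ n : ℕ, m = n ∧ ∃ A : Fin (n + 1) → Set X,
    (⋃ i, A i) = Set.univ ∧ ∀ i, ((ContinuousMap.id X).restrict (A i)).Nullhomotopic}

set_option synthInstance.maxHeartbeats 400000
set_option maxHeartbeats 1000000

open Topology TopologicalSpace Metric Set
open scoped BoundedContinuousFunction unitInterval

theorem anr_ext {X : Type u} [TopologicalSpace X] (hX : IsANR.{u, w} X)
    (W : Type u) [TopologicalSpace W] [MetrizableSpace W] [SeparableSpace W]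
    (C : Set W) (hC : IsClosed C) (g : C(C, X)) :
    ∃ U : Set W, IsOpen U ∧ C ⊆ U ∧
      ∃ G : C(U, X), ∀ (x : W) (hx : x ∈ C) (hU : x ∈ U), G ⟨x, hU⟩ = g ⟨x, hx⟩ := by
  letI : MetricSpace W := TopologicalSpace.metrizableSpaceMetric W
  haveI : SecondCountableTopology W := UniformSpace.secondCountable_of_separable W
  obtain ⟨φ₀, hφ₀⟩ := TopologicalSpace.exists_embedding_l_infty W
  let φ : W → ULift.{w} (ℕ →ᵇ ℝ) := fun x => ULift.up (φ₀ x)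
  have hφ : IsEmbedding φ := (Homeomorph.ulift.symm.isEmbedding).comp hφ₀
  let h : W ≃ₜ Set.range φ := hφ.toHomeomorph
  haveI : MetrizableSpace (Set.range φ) := inferInstance
  obtain ⟨U', hU'o, hCU', G', hG'⟩ := hX.2 (Set.range φ) (h '' C)
    (h.isClosedMap C hC) (g.comp ((h.image C).symm : C(↥(h '' C), ↥C)))
  refine ⟨(⇑h) ⁻¹' U', hU'o.preimage h.continuous, fun x hx => Set.mem_image_of_mem h hx |> hCU', ?_⟩
  refine ⟨⟨fun x => G' ⟨h x.1, x.2⟩,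
    G'.continuous.comp ((h.continuous.comp continuous_subtype_val).subtype_mk _)⟩, ?_⟩
  intro x hxC hxU
  have h2 := hG' (h x) (Set.mem_image_of_mem h hxC) hxU
  show G' ⟨h x, hxU⟩ = g ⟨x, hxC⟩
  rw [h2]
  show g ((h.image C).symm ⟨h x, _⟩) = g ⟨x, hxC⟩
  congr 1
  have : (h.image C) ⟨x, hxC⟩ = ⟨h x, Set.mem_image_of_mem h hxC⟩ := rfl
  rw [← this, Homeomorph.symm_apply_apply]

theorem tube_open {α β : Type*} [TopologicalSpace α] [TopologicalSpace β] [CompactSpace β]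
    {Ω : Set (α × β)} (hΩ : IsOpen Ω) : IsOpen {x : α | ∀ t : β, (x, t) ∈ Ω} := by
  rw [isOpen_iff_forall_mem_open]
  intro x hx
  obtain ⟨u, v, hu, hv, hxu, hIv, huv⟩ := generalized_tube_lemma isCompact_singleton
    isCompact_univ hΩ (by rintro ⟨a, b⟩ ⟨(rfl : a = x), -⟩; exact hx b)
  exact ⟨u, fun y hy t => huv ⟨hy, hIv (mem_univ t)⟩, hu, hxu rfl⟩

theorem anr_ext_path {X : Type u} [TopologicalSpace X] (hX : IsANR.{u, w} X)
    (W : Type u) [TopologicalSpace W] [MetrizableSpace W] [SeparableSpace W]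
    (C : Set W) (hC : IsClosed C) (g : C(C, C(unitInterval, X))) :
    ∃ U : Set W, IsOpen U ∧ C ⊆ U ∧
      ∃ G : C(U, C(unitInterval, X)), ∀ (x : W) (hx : x ∈ C) (hU : x ∈ U),
        G ⟨x, hU⟩ = g ⟨x, hx⟩ := by
  letI : MetricSpace W := metrizableSpaceMetric W
  haveI : SecondCountableTopology W := UniformSpace.secondCountable_of_separable W
  haveI : SecondCountableTopology (W × unitInterval) := inferInstance
  haveI : SeparableSpace (W × unitInterval) := inferInstance
  haveI : MetrizableSpace (W × unitInterval) := inferInstance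
  let C' : Set (W × unitInterval) := C ×ˢ univ
  have hC' : IsClosed C' := hC.prod isClosed_univ
  let e : C(C', ↥C × unitInterval) :=
    ⟨fun p => (⟨p.1.1, p.2.1⟩, p.1.2),
      ((continuous_subtype_val.fst.subtype_mk _).prodMk continuous_subtype_val.snd)⟩
  obtain ⟨Ω, hΩo, hCΩ, G₂, hG₂⟩ := anr_ext hX (W × unitInterval) C' hC' ((g.uncurry).comp e)
  refine ⟨{x : W | ∀ t, (x, t) ∈ Ω}, tube_open hΩo, fun x hx t => hCΩ ⟨hx, mem_univ t⟩, ?_⟩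
  let Φ : C(↥{x : W | ∀ t, (x, t) ∈ Ω} × unitInterval, X) :=
    ⟨fun p => G₂ ⟨(p.1.1, p.2), p.1.2 p.2⟩,
      G₂.continuous.comp (((continuous_subtype_val.comp continuous_fst).prodMk
        continuous_snd).subtype_mk _)⟩
  refine ⟨Φ.curry, fun x hx hU => ?_⟩
  ext t
  have := hG₂ (x, t) ⟨hx, mem_univ t⟩ (hU t)
  simpa [Φ, e] using this

theorem diag_section {X : Type u} [TopologicalSpace X] [CompactSpace X] (hX : IsANR.{u, w} X) :
    ∃ V : Set (X × X), IsOpen V ∧ Set.diagonal X ⊆ V ∧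
      ∃ sig : C(V, C(unitInterval, X)), ∀ p : V, (sig p) 0 = p.1.1 ∧ (sig p) 1 = p.1.2 := by
  haveI : MetrizableSpace X := hX.1
  letI : MetricSpace X := metrizableSpaceMetric X
  haveI : SeparableSpace X := isSeparable_univ_iff.1 isCompact_univ.isSeparable
  haveI : SecondCountableTopology X := UniformSpace.secondCountable_of_separable X
  let C : Set ((X × X) × unitInterval) :=
    (Set.diagonal X ×ˢ univ) ∪ (univ ×ˢ ({0, 1} : Set unitInterval))
  have hC : IsClosed C := ((isClosed_diagonal (X := X)).prod isClosed_univ).union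
    (isClosed_univ.prod (Set.Finite.isClosed (by simp)))
  have hbd : ∀ p : C, (p.1.2 : ℝ) = 1/2 → p.1.1.1 = p.1.1.2 := by
    rintro ⟨⟨⟨x, y⟩, t⟩, hp⟩ ht
    rcases hp with h | h
    · exact h.1
    · rcases h.2 with h0 | h1
      · exfalso
        have : t = 0 := h0
        subst this; norm_num at ht
      · exfalso
        have : t = 1 := h1
        subst this; norm_num at ht
  let g : C(C, X) :=
    ⟨fun p => if ((p.1.2 : ℝ)) ≤ 1/2 then p.1.1.1 else p.1.1.2, by
      refine Continuous.if_le ?_ ?_ ?_ continuous_const hbd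
      · exact continuous_subtype_val.fst.fst
      · exact continuous_subtype_val.fst.snd
      · exact continuous_induced_dom.comp continuous_subtype_val.snd⟩
  haveI : SecondCountableTopology ((X × X) × unitInterval) := inferInstance
  haveI : SeparableSpace ((X × X) × unitInterval) := inferInstance
  haveI : MetrizableSpace ((X × X) × unitInterval) := inferInstance
  obtain ⟨Ω, hΩo, hCΩ, G, hG⟩ := anr_ext hX ((X × X) × unitInterval) C hC g
  refine ⟨{p : X × X | ∀ t, (p, t) ∈ Ω}, tube_open hΩo, fun p hp t => hCΩ (Or.inl ⟨hp, mem_univ t⟩), ?_⟩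
  let Φ : C(↥{p : X × X | ∀ t, (p, t) ∈ Ω} × unitInterval, X) :=
    ⟨fun q => G ⟨(q.1.1, q.2), q.1.2 q.2⟩,
      G.continuous.comp (((continuous_subtype_val.comp continuous_fst).prodMk
        continuous_snd).subtype_mk _)⟩
  refine ⟨Φ.curry, fun p => ⟨?_, ?_⟩⟩
  · have hm : ((p.1, (0 : unitInterval))) ∈ C := Or.inr ⟨mem_univ _, Or.inl rfl⟩
    have := hG (p.1, 0) hm (p.2 0)
    have h2 : g ⟨(p.1, 0), hm⟩ = p.1.1 := by
      simp only [g, ContinuousMap.coe_mk]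
      norm_num
    simpa [Φ, h2] using this
  · have hm : ((p.1, (1 : unitInterval))) ∈ C := Or.inr ⟨mem_univ _, Or.inr rfl⟩
    have := hG (p.1, 1) hm (p.2 1)
    have h2 : g ⟨(p.1, 1), hm⟩ = p.1.2 := by
      simp only [g, ContinuousMap.coe_mk]
      norm_num
    simpa [Φ, h2] using this
open Filter

theorem kuratowski_extend {Z P : Type*} [MetricSpace Z] [MetricSpace P] [CompleteSpace P]
    (A : Set Z) (hA : A.Nonempty) (s : C(A, P)) :
    ∃ W : ℕ → Set Z, (∀ n, IsOpen (W n)) ∧ A ⊆ (⋂ n, W n) ∧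
      ∃ S : C((⋂ n, W n : Set Z), P),
        (∀ b : (⋂ n, W n : Set Z), Filter.Tendsto (fun a : A => s a)
            (Filter.comap (Subtype.val : A → Z) (𝓝[A] (b : Z))) (𝓝 (S b))) ∧
        (∀ b : (⋂ n, W n : Set Z),
            Filter.NeBot (Filter.comap (Subtype.val : A → Z) (𝓝[A] (b : Z)))) ∧
        (∀ (a : Z) (ha : a ∈ A) (hb : a ∈ (⋂ n, W n : Set Z)), S ⟨a, hb⟩ = s ⟨a, ha⟩) := by
  haveI : Nonempty P := ⟨s ⟨hA.some, hA.some_mem⟩⟩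
  -- the filters
  set l : Z → Filter ↥A := fun x => Filter.comap (Subtype.val : A → Z) (𝓝[A] x) with hl
  set F : Z → Filter P := fun x => Filter.map (fun a : A => s a) (l x) with hF
  -- the open sets
  set W : ℕ → Set Z := fun n => {x : Z | ∃ δ ε : ℝ, 0 < δ ∧ 0 < ε ∧
    (∀ p q : ↥A, dist (p : Z) x < δ → dist (q : Z) x < δ → dist (s p) (s q) ≤ 1/(n+1)) ∧
    (∃ p : ↥A, dist (p : Z) x < ε) ∧ δ < 1/(n+1) ∧ ε < 1/(n+1)} with hW
  have hWo : ∀ n, IsOpen (W n) := by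
    intro n
    rw [isOpen_iff_forall_mem_open]
    rintro x ⟨δ, ε, hδ, hε, hpairs, ⟨p₁, hp₁⟩, hδn, hεn⟩
    refine ⟨ball x (min (δ/4) ((1/(n+1) - ε)/2)), ?_, isOpen_ball, ?_⟩
    · intro y hy
      rw [mem_ball] at hy
      have hy4 : dist y x < δ/4 := lt_of_lt_of_le hy (min_le_left _ _)
      have hy2 : dist y x < (1/(n+1) - ε)/2 := lt_of_lt_of_le hy (min_le_right _ _)
      refine ⟨δ/2, ε + (1/(n+1) - ε)/2, by linarith, by linarith, ?_, ?_, by linarith, by linarith⟩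
      · intro p q hp hq
        have := dist_triangle (p : Z) y x
        have := dist_triangle (q : Z) y x
        exact hpairs p q (by linarith [dist_triangle (p : Z) y x]) (by linarith [dist_triangle (q : Z) y x])
      · exact ⟨p₁, by linarith [dist_triangle (p₁ : Z) x y, dist_comm y x ▸ hy2]⟩
    · rw [mem_ball, dist_self]
      have : (0:ℝ) < 1/(n+1) - ε ∨ True := Or.inr trivial
      have hεn' : (0:ℝ) < (1/(n+1) - ε)/2 := by linarith
      positivity
  have hAW : A ⊆ ⋂ n, W n := by
    intro a ha
    refine mem_iInter.2 fun n => ?_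
    have hc := (Metric.continuous_iff.1 s.continuous) ⟨a, ha⟩ (1/(2*(n+1)))
      (by positivity)
    obtain ⟨η, hη, hcont⟩ := hc
    have hpos : (0:ℝ) < 1/(2*(n+1)) := by positivity
    refine ⟨min η (1/(2*(n+1))), min η (1/(2*(n+1))), by positivity, by positivity, ?_, ?_, ?_, ?_⟩
    · intro p q hp hq
      have hp' : dist p (⟨a, ha⟩ : ↥A) < η := by
        rw [Subtype.dist_eq]; exact lt_of_lt_of_le hp (min_le_left _ _)
      have hq' : dist q (⟨a, ha⟩ : ↥A) < η := by
        rw [Subtype.dist_eq]; exact lt_of_lt_of_le hq (min_le_left _ _)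
      have := hcont p hp'
      have := hcont q hq'
      have := dist_triangle (s p) (s ⟨a, ha⟩) (s q)
      have h4 : dist (s ⟨a, ha⟩) (s q) = dist (s q) (s ⟨a, ha⟩) := dist_comm _ _
      have hhalf : 1/(2*((n:ℝ)+1)) + 1/(2*((n:ℝ)+1)) = 1/((n:ℝ)+1) := by
        have hne : ((n:ℝ)+1) ≠ 0 := by positivity
        field_simp
        norm_num
      linarith
    · exact ⟨⟨a, ha⟩, by simpa using lt_min hη hpos⟩
    · have : 1/(2*((n:ℝ)+1)) < 1/(n+1) := by
        apply div_lt_div_of_pos_left <;> [norm_num; positivity; linarith]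
      exact lt_of_le_of_lt (min_le_right _ _) this
    · have : 1/(2*((n:ℝ)+1)) < 1/(n+1) := by
        apply div_lt_div_of_pos_left <;> [norm_num; positivity; linarith]
      exact lt_of_le_of_lt (min_le_right _ _) this
  -- membership in closure
  have hclA : ∀ x ∈ ⋂ n, W n, x ∈ closure A := by
    intro x hx
    rw [Metric.mem_closure_iff]
    intro r hr
    obtain ⟨n, hn⟩ := exists_nat_one_div_lt hr
    obtain ⟨δ, ε, hδ, hε, hpairs, ⟨p, hp⟩, hδn, hεn⟩ := mem_iInter.1 hx n
    exact ⟨p, p.2, by rw [dist_comm]; linarith⟩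
  -- NeBot
  have hNB : ∀ x ∈ ⋂ n, W n, (l x).NeBot := by
    intro x hx
    rw [Filter.comap_neBot_iff]
    intro t ht
    rw [mem_nhdsWithin] at ht
    obtain ⟨U, hUo, hxU, hUt⟩ := ht
    have := (_root_.mem_closure_iff).1 (hclA x hx) U hUo hxU
    obtain ⟨a, haU, haA⟩ := this
    exact ⟨⟨a, haA⟩, hUt ⟨haU, haA⟩⟩
  -- ball sets in the filter
  have hmem : ∀ (x : Z) (δ : ℝ), 0 < δ → (Subtype.val ⁻¹' (ball x δ) : Set ↥A) ∈ l x := by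
    intro x δ hδ
    exact Filter.preimage_mem_comap (mem_nhdsWithin_of_mem_nhds (ball_mem_nhds x hδ))
  -- Cauchy
  have hCauchy : ∀ x ∈ ⋂ n, W n, Cauchy (F x) := by
    intro x hx
    haveI := hNB x hx
    rw [Metric.cauchy_iff]
    refine ⟨Filter.map_neBot, fun ε hε => ?_⟩
    obtain ⟨n, hn⟩ := exists_nat_one_div_lt hε
    obtain ⟨δ, εw, hδ, hεw, hpairs, _, hδn, hεn⟩ := mem_iInter.1 hx n
    refine ⟨(fun a : ↥A => s a) '' (Subtype.val ⁻¹' (ball x δ)),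
      Filter.image_mem_map (hmem x δ hδ), ?_⟩
    rintro u ⟨p, hp, rfl⟩ v ⟨q, hq, rfl⟩
    rw [mem_preimage, mem_ball] at hp hq
    exact lt_of_le_of_lt (hpairs p q hp hq) hn
  -- the limit function
  set S₀ : Z → P := fun x => lim (F x) with hS₀
  have htend : ∀ x ∈ ⋂ n, W n, F x ≤ 𝓝 (S₀ x) := fun x hx => (hCauchy x hx).le_nhds_lim
  -- closure membership of limits
  have hclmem : ∀ x ∈ ⋂ n, W n, ∀ T : Set ↥A, T ∈ l x → S₀ x ∈ closure ((fun a : ↥A => s a) '' T) := by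
    intro x hx T hT
    haveI := hNB x hx
    refine mem_closure_of_tendsto (htend x hx) ?_
    filter_upwards [hT] with a ha using mem_image_of_mem _ ha
  -- continuity estimate
  have hest : ∀ (x : Z), x ∈ ⋂ n, W n → ∀ (n : ℕ) (x' : Z), x' ∈ ⋂ n, W n →
      ∀ δ : ℝ, 0 < δ →
      (∀ p q : ↥A, dist (p : Z) x < δ → dist (q : Z) x < δ → dist (s p) (s q) ≤ 1/(n+1)) →
      dist x' x < δ/4 → dist (S₀ x') (S₀ x) ≤ 1/(n+1) := by
    intro x hx n x' hx' δ hδ hpairs hd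
    set T : Set ↥A := Subtype.val ⁻¹' (ball x δ) with hT
    have h1 : S₀ x ∈ closure ((fun a : ↥A => s a) '' T) := hclmem x hx T (hmem x δ hδ)
    have hsub : (Subtype.val ⁻¹' (ball x' (δ/2)) : Set ↥A) ⊆ T := by
      intro a haux
      rw [mem_preimage, mem_ball] at haux ⊢
      have := dist_triangle (a : Z) x' x
      linarith
    have h2 : S₀ x' ∈ closure ((fun a : ↥A => s a) '' T) := by
      refine closure_mono (image_mono hsub) (hclmem x' hx' _ (hmem x' (δ/2) (by linarith)))
    have hbdd : Bornology.IsBounded ((fun a : ↥A => s a) '' T) := by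
      rw [Metric.isBounded_iff]
      refine ⟨1/(n+1), ?_⟩
      rintro u ⟨p, hp, rfl⟩ v ⟨q, hq, rfl⟩
      rw [hT, mem_preimage, mem_ball] at hp hq
      exact hpairs p q hp hq
    have hdiam : Metric.diam ((fun a : ↥A => s a) '' T) ≤ 1/(n+1) := by
      apply Metric.diam_le_of_forall_dist_le (by positivity)
      rintro u ⟨p, hp, rfl⟩ v ⟨q, hq, rfl⟩
      rw [hT, mem_preimage, mem_ball] at hp hq
      exact hpairs p q hp hq
    calc dist (S₀ x') (S₀ x) ≤ Metric.diam (closure ((fun a : ↥A => s a) '' T)) :=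
          Metric.dist_le_diam_of_mem hbdd.closure h2 h1
      _ = Metric.diam ((fun a : ↥A => s a) '' T) := Metric.diam_closure _
      _ ≤ 1/(n+1) := hdiam
  -- continuity of S
  have hScont : Continuous (fun b : (⋂ n, W n : Set Z) => S₀ (b : Z)) := by
    rw [Metric.continuous_iff]
    intro b ε hε
    obtain ⟨n, hn⟩ := exists_nat_one_div_lt hε
    obtain ⟨δ, εw, hδ, hεw, hpairs, _, hδn, hεn⟩ := mem_iInter.1 b.2 n
    refine ⟨δ/4, by linarith, fun b' hb' => ?_⟩
    rw [Subtype.dist_eq] at hb'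
    exact lt_of_le_of_lt (hest (b : Z) b.2 n (b' : Z) b'.2 δ hδ hpairs hb') hn
  refine ⟨W, hWo, hAW, ⟨fun b => S₀ (b : Z), hScont⟩, ?_, ?_, ?_⟩
  · intro b
    exact htend (b : Z) b.2
  · intro b
    exact hNB (b : Z) b.2
  · intro a ha hb
    have h1 : Filter.Tendsto (fun a : ↥A => s a) (l a) (𝓝 (S₀ a)) := htend a hb
    have hla : l a = 𝓝 (⟨a, ha⟩ : ↥A) := by
      show Filter.comap (Subtype.val : ↥A → Z) (𝓝[A] a) = 𝓝 (⟨a, ha⟩ : ↥A)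
      have hnw : 𝓝[A] a = 𝓝 a ⊓ Filter.principal A := rfl
      rw [hnw, Filter.comap_inf, Filter.comap_principal, nhds_subtype_eq_comap]
      have : (Subtype.val ⁻¹' A : Set ↥A) = univ := by
        ext p; simpa using p.2
      rw [this, Filter.principal_univ, inf_top_eq]
    have h2 : Filter.Tendsto (fun a : ↥A => s a) (l a) (𝓝 (s ⟨a, ha⟩)) := by
      rw [hla]
      exact s.continuous.tendsto _
    haveI := hNB a hb
    exact tendsto_nhds_unique h1 h2

theorem graph_selection {Z : Type u} [MetricSpace Z] (F : ℕ → Set Z)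
    (hFc : ∀ n, IsClosed (F n)) (hFne : ∀ n, (F n).Nonempty)
    {B : Set Z} (hB : ∀ x, x ∈ B ↔ ∀ n, x ∉ F n)
    {Ω : Set (Z × (ℕ → ℝ))} (hΩ : IsOpen Ω)
    (hEΩ : ∀ b ∈ B, (b, fun n => (infDist b (F n))⁻¹) ∈ Ω) :
    ∃ U : Set Z, IsOpen U ∧ B ⊆ U ∧
      ∃ lam : ↥U → (ℕ → ℝ), Continuous lam ∧ ∀ y : ↥U, ((y : Z), lam y) ∈ Ω := by
  classical
  set g : ℕ → Z → ℝ := fun n x => (infDist x (F n))⁻¹ with hg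
  have hgnn : ∀ n x, 0 ≤ g n x := fun n x => inv_nonneg.2 infDist_nonneg
  have hgpos : ∀ n, ∀ b ∈ B, 0 < infDist b (F n) :=
    fun n b hb => ((hFc n).notMem_iff_infDist_pos (hFne n)).1 ((hB b).1 hb n)
  -- Step 1: boxes
  have hbox : ∀ b ∈ B, ∃ (ε : ℝ) (N : ℕ), 0 < ε ∧
      ∀ (x : Z) (r : ℕ → ℝ), dist x b < ε → (∀ n, n ≤ N → |r n - g n b| < ε) → (x, r) ∈ Ω := by
    intro b hb
    have hmem : Ω ∈ 𝓝 (b, fun n => g n b) := hΩ.mem_nhds (hEΩ b hb)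
    rw [nhds_prod_eq, Filter.mem_prod_iff] at hmem
    obtain ⟨s, hs, t, ht, hst⟩ := hmem
    rw [nhds_pi, Filter.mem_pi] at ht
    obtain ⟨Idx, hIfin, V, hV, hVt⟩ := ht
    obtain ⟨N, hN⟩ : ∃ N : ℕ, ∀ i ∈ Idx, i ≤ N := by
      rcases hIfin.bddAbove with ⟨N, hN⟩
      exact ⟨N, fun i hi => hN hi⟩
    choose e he hbe using fun i => Metric.mem_nhds_iff.1 (hV i)
    obtain ⟨εb, hεb, hballs⟩ := Metric.mem_nhds_iff.1 hs
    set J : Finset ℕ := insert 0 hIfin.toFinset with hJ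
    have hJne : J.Nonempty := ⟨0, Finset.mem_insert_self _ _⟩
    set εI : ℝ := J.inf' hJne e with hεI
    have hεIpos : 0 < εI := (Finset.lt_inf'_iff hJne).2 fun i _ => he i
    refine ⟨min εb εI, N, lt_min hεb hεIpos, ?_⟩
    intro x r hx hr
    apply hst
    constructor
    · exact hballs (mem_ball.2 (lt_of_lt_of_le hx (min_le_left _ _)))
    · apply hVt
      intro i hi
      apply hbe i
      rw [mem_ball, Real.dist_eq]
      have h1 : |r i - g i b| < min εb εI := hr i (hN i hi)
      have h2 : εI ≤ e i := Finset.inf'_le e (by simp [hJ, hIfin.mem_toFinset, hi])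
      exact lt_of_lt_of_le h1 (le_trans (min_le_right _ _) h2)
  -- Step 2: refined radii
  have href : ∀ b ∈ B, ∀ (ε : ℝ) (N : ℕ), 0 < ε →
      ∃ δ : ℝ, 0 < δ ∧ δ ≤ ε/2 ∧ ∀ x : Z, dist x b < δ → ∀ n, n ≤ N →
        0 < infDist x (F n) ∧ |g n x - g n b| < min 1 ε := by
    intro b hb ε N hε
    have hev : ∀ᶠ x in 𝓝 b, ∀ n ∈ {m : ℕ | m ≤ N},
        0 < infDist x (F n) ∧ |g n x - g n b| < min 1 ε := by
      rw [Filter.eventually_all_finite (Set.finite_le_nat N)]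
      intro n _
      have hc : ContinuousAt (fun x => infDist x (F n)) b :=
        (continuous_infDist_pt (F n)).continuousAt
      have hpos : ∀ᶠ x in 𝓝 b, 0 < infDist x (F n) :=
        hc.eventually (eventually_gt_nhds (hgpos n b hb))
      have hcg : ContinuousAt (g n) b := hc.inv₀ (ne_of_gt (hgpos n b hb))
      have h2 : ∀ᶠ x in 𝓝 b, |g n x - g n b| < min 1 ε := by
        have := Metric.tendsto_nhds.1 hcg (min 1 ε) (lt_min one_pos hε)
        simpa [Real.dist_eq] using this
      exact hpos.and h2
    rw [Metric.eventually_nhds_iff] at hev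
    obtain ⟨δ₀, hδ₀, hδev⟩ := hev
    refine ⟨min δ₀ (ε/2) / 2, by positivity, by
        have h1 : min δ₀ (ε/2) ≤ ε/2 := min_le_right _ _
        have h2 : (0:ℝ) < min δ₀ (ε/2) := lt_min hδ₀ (by positivity)
        linarith, ?_⟩
    intro x hx n hn
    have : dist x b < δ₀ := by
      have h2 : (0:ℝ) < min δ₀ (ε/2) := lt_min hδ₀ (by positivity)
      have := min_le_left δ₀ (ε/2)
      linarith
    exact hδev this n hn
  -- Step 3: choices
  choose! ε N hεpos hboxP using hbox
  choose! δ hδpos hδle hδP using fun b hb => href b hb (ε b) (N b) (hεpos b hb)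
  set h : Z → ℝ := fun b => 1 + ∑ n ∈ Finset.range (N b + 1), g n b with hh
  have hone : ∀ b, 1 ≤ h b := by
    intro b
    have : 0 ≤ ∑ n ∈ Finset.range (N b + 1), g n b :=
      Finset.sum_nonneg fun n _ => hgnn n b
    simp [hh]; linarith
  have hgle : ∀ b, ∀ n ≤ N b, g n b + 1 ≤ h b := by
    intro b n hn
    have := Finset.single_le_sum (f := fun n => g n b) (fun i _ => hgnn i b)
      (Finset.mem_range.2 (Nat.lt_succ_of_le hn))
    simp only [hh]; linarith
  -- the open set
  set U : Set Z := ⋃ (b : Z) (hb : b ∈ B), ball b (δ b) with hU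
  have hUo : IsOpen U := isOpen_iUnion fun b => isOpen_iUnion fun _ => isOpen_ball
  have hBU : B ⊆ U := fun b hb => mem_iUnion₂.2 ⟨b, hb, mem_ball_self (hδpos b hb)⟩
  -- the dominating function ψ
  set t : ↥U → Set ℝ := fun y => {c : ℝ | ∃ b, ∃ _ : b ∈ B, (y : Z) ∈ ball b (δ b) ∧ h b ≤ c}
    with hts
  have hconv : ∀ y, Convex ℝ (t y) := by
    intro y
    rw [convex_iff_ordConnected]
    constructor
    rintro c1 ⟨b, hb, hyb, hbc⟩ c2 _ z hz
    exact ⟨b, hb, hyb, le_trans hbc hz.1⟩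
  have hloc : ∀ y : ↥U, ∃ V ∈ 𝓝 y, ∃ ψ₀ : ↥U → ℝ, ContinuousOn ψ₀ V ∧ ∀ z ∈ V, ψ₀ z ∈ t z := by
    intro y
    obtain ⟨b, hb, hyb⟩ := mem_iUnion₂.1 y.2
    refine ⟨Subtype.val ⁻¹' (ball b (δ b)), (isOpen_ball.preimage continuous_subtype_val).mem_nhds hyb,
      fun _ => h b, continuousOn_const, ?_⟩
    intro z hz
    exact ⟨b, hb, hz, le_refl _⟩
  obtain ⟨ψ, hψ⟩ := exists_continuous_forall_mem_convex_of_local hconv hloc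
  have hψ1 : ∀ y, 1 ≤ ψ y := by
    intro y
    obtain ⟨b, hb, hyb, hbc⟩ := hψ y
    exact le_trans (hone b) hbc
  have hψpos : ∀ y, 0 < ψ y := fun y => lt_of_lt_of_le one_pos (hψ1 y)
  -- the selection
  set lam : ↥U → (ℕ → ℝ) :=
    fun y n => min (ψ y) ((max (infDist (y : Z) (F n)) (ψ y)⁻¹)⁻¹) with hlam
  have hlamc : Continuous lam := by
    apply continuous_pi
    intro n
    have hd : Continuous fun y : ↥U => infDist (y : Z) (F n) :=
      (continuous_infDist_pt (F n)).comp continuous_subtype_val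
    have hinv : Continuous fun y : ↥U => (ψ y)⁻¹ :=
      ψ.continuous.inv₀ fun y => ne_of_gt (hψpos y)
    have hmax : Continuous fun y : ↥U => max (infDist (y : Z) (F n)) (ψ y)⁻¹ := hd.max hinv
    have hmaxpos : ∀ y : ↥U, 0 < max (infDist (y : Z) (F n)) (ψ y)⁻¹ :=
      fun y => lt_of_lt_of_le (inv_pos.2 (hψpos y)) (le_max_right _ _)
    exact ψ.continuous.min (hmax.inv₀ fun y => ne_of_gt (hmaxpos y))
  refine ⟨U, hUo, hBU, lam, hlamc, ?_⟩
  intro y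
  obtain ⟨b, hb, hyb, hble⟩ := hψ y
  rw [mem_ball] at hyb
  apply hboxP b hb
  · calc dist (y : Z) b < δ b := hyb
      _ ≤ ε b / 2 := hδle b hb
      _ < ε b := by have := hεpos b hb; linarith
  · intro n hn
    obtain ⟨hdpos, hdist⟩ := hδP b hb (y : Z) hyb n hn
    have hgy : g n (y : Z) ≤ ψ y := by
      have h1 : g n (y : Z) < g n b + min 1 (ε b) := by
        have := abs_lt.1 hdist
        linarith [this.2]
      have h2 : g n b + min 1 (ε b) ≤ g n b + 1 := by
        have := min_le_left 1 (ε b); linarith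
      linarith [hgle b n hn, hble]
    have hmaxeq : max (infDist (y : Z) (F n)) (ψ y)⁻¹ = infDist (y : Z) (F n) := by
      apply max_eq_left
      rw [inv_le_comm₀ (hψpos y) hdpos]
      exact hgy
    have hlameq : lam y n = g n (y : Z) := by
      rw [hlam]
      simp only
      rw [hmaxeq]
      exact min_eq_right hgy
    rw [hlameq]
    exact lt_of_lt_of_le hdist (min_le_right _ _)
theorem section_enlarge {X : Type u} [TopologicalSpace X] [CompactSpace X] (hX : IsANR.{u, w} X)
    (A : Set (X × X)) (hA : HasLocalSectionPi A) :
    ∃ U : Set (X × X), IsOpen U ∧ A ⊆ U ∧ HasLocalSectionPi U := by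
  classical
  rcases Set.eq_empty_or_nonempty A with rfl | hAne
  · refine ⟨∅, isOpen_empty, subset_rfl, ?_⟩
    haveI : IsEmpty ↥(∅ : Set (X × X)) := Set.isEmpty_coe_sort.2 rfl
    exact ⟨⟨fun a => isEmptyElim a, continuous_iff_continuousAt.mpr fun a => isEmptyElim a⟩,
      fun a => isEmptyElim a⟩
  by_cases hAu : A = Set.univ
  · exact ⟨Set.univ, isOpen_univ, Set.subset_univ A, hAu ▸ hA⟩
  obtain ⟨p₀, hp₀⟩ := (Set.ne_univ_iff_exists_notMem A).1 hAu
  haveI : TopologicalSpace.MetrizableSpace X := hX.1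
  letI : MetricSpace X := TopologicalSpace.metrizableSpaceMetric X
  haveI : SeparableSpace X := isSeparable_univ_iff.1 isCompact_univ.isSeparable
  haveI : SecondCountableTopology X := UniformSpace.secondCountable_of_separable X
  haveI : CompleteSpace X := inferInstance
  obtain ⟨V, hVo, hVd, sig, hsig⟩ := diag_section hX
  obtain ⟨s, hs⟩ := hA
  obtain ⟨W, hWo, hAB, S, hStend, hSnb, hSA⟩ := kuratowski_extend A hAne s
  -- endpoint exactness of S
  have hSend : ∀ b : (⋂ n, W n : Set (X × X)), ((S b) 0, (S b) 1) = (b : X × X) := by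
    intro b
    haveI := hSnb b
    have hvaltend : Filter.Tendsto (fun a : ↥A => (a : X × X))
        (Filter.comap (Subtype.val : ↥A → X × X) (𝓝[A] (b : X × X))) (𝓝 (b : X × X)) :=
      Filter.tendsto_comap.mono_right nhdsWithin_le_nhds
    rw [Prod.ext_iff]
    constructor
    · have h1 : Filter.Tendsto (fun a : ↥A => (s a) 0)
          (Filter.comap (Subtype.val : ↥A → X × X) (𝓝[A] (b : X × X))) (𝓝 ((S b) 0)) :=
        ((continuous_eval_const (0 : unitInterval)).tendsto _).comp (hStend b)
      have heq : (fun a : ↥A => (s a) 0) = fun a : ↥A => ((a : X × X)).1 := by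
        funext a; exact congrArg Prod.fst (hs a)
      rw [heq] at h1
      exact tendsto_nhds_unique h1 (continuous_fst.tendsto _|>.comp hvaltend)
    · have h1 : Filter.Tendsto (fun a : ↥A => (s a) 1)
          (Filter.comap (Subtype.val : ↥A → X × X) (𝓝[A] (b : X × X))) (𝓝 ((S b) 1)) :=
        ((continuous_eval_const (1 : unitInterval)).tendsto _).comp (hStend b)
      have heq : (fun a : ↥A => (s a) 1) = fun a : ↥A => ((a : X × X)).2 := by
        funext a; exact congrArg Prod.snd (hs a)
      rw [heq] at h1
      exact tendsto_nhds_unique h1 (continuous_snd.tendsto _|>.comp hvaltend)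
  -- the Gδ set avoiding p₀
  set F : ℕ → Set (X × X) := fun n => (W n)ᶜ ∪ {p₀} with hF
  have hFc : ∀ n, IsClosed (F n) := fun n => (hWo n).isClosed_compl.union isClosed_singleton
  have hFne : ∀ n, (F n).Nonempty := fun n => ⟨p₀, Or.inr rfl⟩
  set B : Set (X × X) := {x | ∀ n, x ∉ F n} with hBdef
  have hB : ∀ x, x ∈ B ↔ ∀ n, x ∉ F n := fun x => Iff.rfl
  have hBsub : B ⊆ ⋂ n, W n := by
    intro x hx
    exact Set.mem_iInter.2 fun n => by
      have := hx n
      simp only [hF, Set.mem_union, not_or, Set.mem_compl_iff, not_not] at this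
      exact this.1
  have hAB' : A ⊆ B := by
    intro a ha n hmem
    rcases hmem with hmem | hmem
    · exact hmem (Set.mem_iInter.1 (hAB ha) n)
    · exact hp₀ ((Set.mem_singleton_iff.1 hmem) ▸ ha)
  -- the closed copy of B in M
  set M := (X × X) × (ℕ → ℝ) with hM
  set E : Set M := {m | ∀ n, m.2 n * infDist m.1 (F n) = 1} with hE
  have hEc : IsClosed E := by
    have : E = ⋂ n, {m : M | m.2 n * infDist m.1 (F n) = 1} := by
      ext m; simp [hE, Set.mem_iInter]
    rw [this]
    refine isClosed_iInter fun n => isClosed_eq ?_ continuous_const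
    exact ((continuous_apply n).comp continuous_snd).mul
      ((continuous_infDist_pt (F n)).comp continuous_fst)
  have hEB : ∀ m : M, m ∈ E → m.1 ∈ B := by
    intro m hm n
    intro hmem
    have h0 : infDist m.1 (F n) = 0 := infDist_zero_of_mem hmem
    have := hm n
    rw [h0, mul_zero] at this
    exact zero_ne_one this
  have hBE : ∀ b ∈ B, ((b, fun n => (infDist b (F n))⁻¹) : M) ∈ E := by
    intro b hb n
    have hpos : 0 < infDist b (F n) := ((hFc n).notMem_iff_infDist_pos (hFne n)).1 (hb n)
    exact inv_mul_cancel₀ (ne_of_gt hpos)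
  -- extend S over an open neighborhood of E in M
  haveI : SecondCountableTopology (X × X) := inferInstance
  haveI : TopologicalSpace.MetrizableSpace M := inferInstance
  haveI : SeparableSpace M := inferInstance
  set F₀ : C(E, C(unitInterval, X)) :=
    ⟨fun m => S ⟨(m : M).1, hBsub (hEB m m.2)⟩,
      S.continuous.comp ((continuous_fst.comp continuous_subtype_val).subtype_mk _)⟩ with hF₀
  obtain ⟨Ω₀, hΩ₀o, hEΩ₀, G, hG⟩ := anr_ext_path hX M E hEc F₀
  -- shrink to exact-endpoint region
  set Ω : Set M := {m : M | ∃ hm : m ∈ Ω₀,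
      ((m.1.1, (G ⟨m, hm⟩) 0) ∈ V ∧ ((G ⟨m, hm⟩) 1, m.1.2) ∈ V)} with hΩdef
  have hΩo : IsOpen Ω := by
    have himg : Ω = Subtype.val '' {ω : ↥Ω₀ |
        (((ω : M).1.1, (G ω) 0) ∈ V ∧ ((G ω) 1, ((ω : M)).1.2) ∈ V)} := by
      ext m
      constructor
      · rintro ⟨hm, h1, h2⟩
        exact ⟨⟨m, hm⟩, ⟨h1, h2⟩, rfl⟩
      · rintro ⟨ω, hcond, rfl⟩
        exact ⟨ω.2, hcond.1, hcond.2⟩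
    rw [himg]
    apply hΩ₀o.isOpenMap_subtype_val
    apply IsOpen.inter
    · exact IsOpen.preimage ((continuous_fst.fst.comp continuous_subtype_val).prodMk
        ((continuous_eval_const (0 : unitInterval)).comp G.continuous)) hVo
    · exact IsOpen.preimage (((continuous_eval_const (1 : unitInterval)).comp
        G.continuous).prodMk (continuous_fst.snd.comp continuous_subtype_val)) hVo
  have hEΩ : ∀ b ∈ B, ((b, fun n => (infDist b (F n))⁻¹) : M) ∈ Ω := by
    intro b hb
    have hmE : ((b, fun n => (infDist b (F n))⁻¹) : M) ∈ E := hBE b hb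
    have hmΩ₀ : ((b, fun n => (infDist b (F n))⁻¹) : M) ∈ Ω₀ := hEΩ₀ hmE
    refine ⟨hmΩ₀, ?_, ?_⟩
    · have hGeq := hG _ hmE hmΩ₀
      rw [hGeq]
      have h0 : (F₀ ⟨_, hmE⟩) 0 = b.1 :=
        congrArg Prod.fst (hSend ⟨b, hBsub (hEB _ hmE)⟩)
      rw [hF₀] at h0 ⊢
      simp only [ContinuousMap.coe_mk] at h0 ⊢
      rw [h0]
      exact hVd rfl
    · have hGeq := hG _ hmE hmΩ₀
      rw [hGeq]
      have h1 : (F₀ ⟨_, hmE⟩) 1 = b.2 :=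
        congrArg Prod.snd (hSend ⟨b, hBsub (hEB _ hmE)⟩)
      rw [hF₀] at h1 ⊢
      simp only [ContinuousMap.coe_mk] at h1 ⊢
      rw [h1]
      exact hVd rfl
  -- selection
  obtain ⟨U, hUo, hBU, lam, hlamc, hlamΩ⟩ := graph_selection F hFc hFne hB hΩo hEΩ
  refine ⟨U, hUo, Set.Subset.trans hAB' hBU, ?_⟩
  -- build the section on U
  have hmΩ₀ : ∀ y : ↥U, (((y : X × X), lam y) : M) ∈ Ω₀ := fun y => (hlamΩ y).choose
  set mid : ↥U → C(unitInterval, X) := fun y => G ⟨((y : X × X), lam y), hmΩ₀ y⟩ with hmid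
  have hmidc : Continuous mid :=
    G.continuous.comp ((continuous_subtype_val.prodMk hlamc).subtype_mk _)
  have hV1 : ∀ y : ↥U, ((y : X × X).1, (mid y) 0) ∈ V := fun y => (hlamΩ y).choose_spec.1
  have hV2 : ∀ y : ↥U, ((mid y) 1, (y : X × X).2) ∈ V := fun y => (hlamΩ y).choose_spec.2
  set γ₁ : ∀ y : ↥U, Path ((y : X × X).1) ((mid y) 0) := fun y =>
    { toContinuousMap := sig ⟨((y : X × X).1, (mid y) 0), hV1 y⟩,
      source' := (hsig _).1, target' := (hsig _).2 } with hγ₁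
  set γ₂ : ∀ y : ↥U, Path ((mid y) 0) ((mid y) 1) := fun y =>
    { toContinuousMap := mid y, source' := rfl, target' := rfl } with hγ₂
  set γ₃ : ∀ y : ↥U, Path ((mid y) 1) ((y : X × X).2) := fun y =>
    { toContinuousMap := sig ⟨((mid y) 1, (y : X × X).2), hV2 y⟩,
      source' := (hsig _).1, target' := (hsig _).2 } with hγ₃
  have h1 : Continuous ↿γ₁ := by
    have hη : Continuous fun y : ↥U => sig ⟨((y : X × X).1, (mid y) 0), hV1 y⟩ :=
      sig.continuous.comp (((continuous_subtype_val.fst).prodMk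
        ((continuous_eval_const (0 : unitInterval)).comp hmidc)).subtype_mk _)
    exact continuous_eval.comp ((hη.comp continuous_fst).prodMk continuous_snd)
  have h2 : Continuous ↿γ₂ := by
    exact continuous_eval.comp ((hmidc.comp continuous_fst).prodMk continuous_snd)
  have h3 : Continuous ↿γ₃ := by
    have hη : Continuous fun y : ↥U => sig ⟨((mid y) 1, (y : X × X).2), hV2 y⟩ :=
      sig.continuous.comp ((((continuous_eval_const (1 : unitInterval)).comp
        hmidc).prodMk (continuous_subtype_val.snd)).subtype_mk _)
    exact continuous_eval.comp ((hη.comp continuous_fst).prodMk continuous_snd)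
  set γ : ∀ y : ↥U, Path ((y : X × X).1) ((y : X × X).2) := fun y =>
    (γ₁ y).trans ((γ₂ y).trans (γ₃ y)) with hγ
  have hγc : Continuous ↿γ :=
    Path.trans_continuous_family γ₁ h1 (fun y => (γ₂ y).trans (γ₃ y))
      (Path.trans_continuous_family γ₂ h2 γ₃ h3)
  set Φ : C(↥U × unitInterval, X) := ⟨↿γ, hγc⟩ with hΦ
  refine ⟨Φ.curry, fun y => ?_⟩
  show ((γ y) 0, (γ y) 1) = (y : X × X)
  rw [Path.source, Path.target]

theorem null_enlarge {X : Type u} [TopologicalSpace X] [CompactSpace X] (hX : IsANR.{u, w} X)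
    (A : Set X) (hA : ((ContinuousMap.id X).restrict A).Nullhomotopic) :
    ∃ U : Set X, IsOpen U ∧ A ⊆ U ∧ ((ContinuousMap.id X).restrict U).Nullhomotopic := by
  obtain ⟨y₀, hH⟩ := hA
  obtain ⟨H⟩ := hH
  set Atil : Set (X × X) := {p | p.1 ∈ A ∧ p.2 = y₀} with hAtil
  have hsec : HasLocalSectionPi Atil := by
    set Ψ : C(↥Atil × unitInterval, X) :=
      ⟨fun q => H (q.2, ⟨q.1.1.1, q.1.2.1⟩),
        H.continuous.comp (continuous_snd.prodMk
          (((continuous_subtype_val.comp continuous_fst).fst).subtype_mk _))⟩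
      with hΨ
    refine ⟨Ψ.curry, fun p => ?_⟩
    have h0 : (Ψ.curry p) 0 = (p : X × X).1 := by
      show H (0, ⟨(p : X × X).1, p.2.1⟩) = (p : X × X).1
      rw [H.apply_zero]
      rfl
    have h1 : (Ψ.curry p) 1 = (p : X × X).2 := by
      show H (1, ⟨(p : X × X).1, p.2.1⟩) = (p : X × X).2
      rw [H.apply_one]
      exact p.2.2.symm
    rw [Prod.ext_iff]
    exact ⟨h0, h1⟩
  obtain ⟨Uhat, hUhato, hsub, τ, hτ⟩ := section_enlarge hX Atil hsec
  refine ⟨{x : X | (x, y₀) ∈ Uhat}, hUhato.preimage (continuous_id.prodMk continuous_const),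
    fun x hx => hsub ⟨hx, rfl⟩, ?_⟩
  refine ⟨y₀, ⟨?_⟩⟩
  refine ContinuousMap.Homotopy.mk
    ⟨fun q => (τ ⟨((q.2 : X), y₀), q.2.2⟩) q.1, ?_⟩ ?_ ?_
  · refine continuous_eval.comp ((Continuous.comp τ.continuous ?_).prodMk
      continuous_fst)
    exact ((continuous_subtype_val.comp continuous_snd).prodMk continuous_const).subtype_mk _
  · intro u
    exact congrArg Prod.fst (hτ ⟨((u : X), y₀), u.2⟩)
  · intro u
    exact congrArg Prod.snd (hτ ⟨((u : X), y₀), u.2⟩)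

/-- If `X` is a compact ANR then `tc(X) = tc_g(X)`; if moreover `X` is connected then
`cat(X) = cat_g(X)`. -/
theorem tc_eq_tcg_of_compact_ANR (X : Type u) [TopologicalSpace X] [CompactSpace X]
    (hX : IsANR X) :
    tc X = tcg X ∧ (ConnectedSpace X → catSpace X = catgSpace X) := by
  constructor
  · unfold tc tcg
    congr 1
    ext m
    constructor
    · rintro ⟨n, rfl, A, hcov, hP⟩
      exact ⟨n, rfl, A, hcov, fun i => (hP i).2⟩
    · rintro ⟨n, rfl, A, hcov, hP⟩
      choose U hUo hAU hUs using fun i => section_enlarge hX (A i) (hP i)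
      refine ⟨n, rfl, U, ?_, fun i => ⟨hUo i, hUs i⟩⟩
      apply Set.eq_univ_of_univ_subset
      rw [← hcov]
      exact Set.iUnion_mono hAU
  · intro _
    unfold catSpace catgSpace
    congr 1
    ext m
    constructor
    · rintro ⟨n, rfl, A, hcov, hP⟩
      exact ⟨n, rfl, A, hcov, fun i => (hP i).2⟩
    · rintro ⟨n, rfl, A, hcov, hP⟩
      choose U hUo hAU hUs using fun i => null_enlarge hX (A i) (hP i)
      refine ⟨n, rfl, U, ?_, fun i => ⟨hUo i, hUs i⟩⟩
      apply Set.eq_univ_of_univ_subset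
      rw [← hcov]
      exact Set.iUnion_mono hAU
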